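/- arXiv:1902.06134 — 2 statements merged into one kernel-verified Lean document; each statement's English description precedes it below -/
import Mathlib

section
/- Assume the periodic perforations, the perturbed perforations and Assumption (A2) as described in the context, and let Ω be an open subset of ℝ^d. For ε > 0 set Ω_ε = Ω ∖ ε·closure(𝒪), where ε·A = {εx : x ∈ A}. Then there exists a constant C > 0, independent of ε, such that for every ε > 0 and every continuously differentiable function u : ℝ^d → ℝ whose support is a compact subset of the open set Ω_ε, one has ∫_{Ω_ε} u² ≤ C ε² ∫_{Ω_ε} ‖∇u‖². -/
open MeasureTheory Metric Set Filter Topology Asymptotics RealInnerProductSpace Pointwise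

noncomputable section

abbrev Euc (d : ℕ) := EuclideanSpace ℝ (Fin d)

def unitCube (d : ℕ) : Set (Euc d) := {x | ∀ i, x i ∈ Set.Ioo (0:ℝ) 1}

def closedUnitCube (d : ℕ) : Set (Euc d) := {x | ∀ i, x i ∈ Set.Icc (0:ℝ) 1}

def box {d : ℕ} (a b : Fin d → ℝ) : Set (Euc d) := {x | ∀ i, x i ∈ Set.Icc (a i) (b i)}

def cell (d : ℕ) (k : Fin d → ℤ) : Set (Euc d) := {x | ∀ i, x i - (k i : ℝ) ∈ Set.Ioo (0:ℝ) 1}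

def perHole {d : ℕ} (Oper : Set (Euc d)) (k : Fin d → ℤ) : Set (Euc d) :=
  {x | (show Euc d from WithLp.toLp 2 (fun i => x i - (k i : ℝ))) ∈ Oper}

def perHoles {d : ℕ} (Oper : Set (Euc d)) : Set (Euc d) := ⋃ k : Fin d → ℤ, perHole Oper k

def holes {d : ℕ} (O : (Fin d → ℤ) → Set (Euc d)) : Set (Euc d) := ⋃ k, O k

def perPlus {d : ℕ} (Oper : Set (Euc d)) (k : Fin d → ℤ) (a : ℝ) : Set (Euc d) :=
  {x | Metric.infDist x (perHole Oper k) < a}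

def perMinus {d : ℕ} (Oper : Set (Euc d)) (k : Fin d → ℤ) (a : ℝ) : Set (Euc d) :=
  {x ∈ perHole Oper k | a < Metric.infDist x (frontier (perHole Oper k))}

def lap {d : ℕ} (w : Euc d → ℝ) (x : Euc d) : ℝ :=
  ∑ i, fderiv ℝ (fun y => fderiv ℝ w y (EuclideanSpace.single i 1)) x (EuclideanSpace.single i 1)

section Helpers

variable {d : ℕ}

lemma grad_inner (u : Euc d → ℝ) (y v : Euc d) :
    fderiv ℝ u y v = ⟪gradient u y, v⟫ := by
  rw [← InnerProductSpace.toDual_apply_apply]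
  simp only [gradient, LinearIsometryEquiv.apply_symm_apply]

lemma grad_norm (u : Euc d → ℝ) (y : Euc d) :
    ‖gradient u y‖ = ‖fderiv ℝ u y‖ := by
  simp only [gradient, LinearIsometryEquiv.norm_map]

lemma grad_cont {u : Euc d → ℝ} (hu : ContDiff ℝ 1 u) : Continuous (gradient u) := by
  show Continuous fun x => (InnerProductSpace.toDual ℝ (Euc d)).symm (fderiv ℝ u x)
  exact (LinearIsometryEquiv.continuous _).comp (hu.continuous_fderiv one_ne_zero)

lemma grad_zero_of_nmem_tsupport {u : Euc d → ℝ} {x : Euc d} (hx : x ∉ tsupport u) :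
    gradient u x = 0 := by
  have h0 : u =ᶠ[𝓝 x] (fun _ => (0:ℝ)) := by
    filter_upwards [(isClosed_tsupport u).isOpen_compl.mem_nhds hx] with y hy
    exact image_eq_zero_of_notMem_tsupport hy
  have h1 : fderiv ℝ u x = fderiv ℝ (fun _ => (0:ℝ)) x := h0.fderiv_eq
  simp only [gradient, h1, fderiv_const]
  simp

lemma grad_compact_support {u : Euc d → ℝ} (hsupp : HasCompactSupport u) :
    HasCompactSupport (gradient u) :=
  HasCompactSupport.intro hsupp (fun _ hx => grad_zero_of_nmem_tsupport hx)

lemma sq_intervalIntegral_le {a b : ℝ} (hab : a ≤ b) {g : ℝ → ℝ} (hg : Continuous g) :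
    (∫ t in a..b, g t) ^ 2 ≤ (b - a) * ∫ t in a..b, g t ^ 2 := by
  rcases eq_or_lt_of_le hab with rfl | hlt
  · simp
  · set I := ∫ t in a..b, g t with hI
    set J := ∫ t in a..b, g t ^ 2 with hJ
    have hLpos : 0 < b - a := by linarith
    set m := I / (b - a) with hm
    have key : (0:ℝ) ≤ ∫ t in a..b, (g t - m) ^ 2 :=
      intervalIntegral.integral_nonneg hab (fun t _ => sq_nonneg _)
    have expand : ∫ t in a..b, (g t - m) ^ 2 = J - 2 * m * I + m ^ 2 * (b - a) := by
      have e : ∀ t, (g t - m) ^ 2 = g t ^ 2 - (2 * m) * g t + m ^ 2 := fun t => by ring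
      rw [intervalIntegral.integral_congr (g := fun t => g t ^ 2 - (2*m) * g t + m ^ 2)
        (fun t _ => e t)]
      rw [intervalIntegral.integral_add (f := fun t => g t ^ 2 - (2*m) * g t) (g := fun _ => m ^ 2) (((hg.pow 2).sub (continuous_const.mul hg)).intervalIntegrable a b)
        (continuous_const.intervalIntegrable a b),
        intervalIntegral.integral_sub (f := fun t => g t ^ 2) (g := fun t => (2*m) * g t) ((hg.pow 2).intervalIntegrable a b)
        ((continuous_const.mul hg).intervalIntegrable a b),
        intervalIntegral.integral_const_mul, intervalIntegral.integral_const]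
      simp only [smul_eq_mul]
      ring
    have e1 : J - 2 * m * I + m ^ 2 * (b - a) = J - I ^ 2 / (b - a) := by
      rw [hm]; field_simp; ring
    rw [expand, e1] at key
    have h2 : I ^ 2 / (b - a) ≤ J := by linarith
    calc I ^ 2 = (I ^ 2 / (b - a)) * (b - a) := by field_simp
    _ ≤ J * (b - a) := mul_le_mul_of_nonneg_right h2 hLpos.le
    _ = (b - a) * J := mul_comm _ _

end Helpers

section Geo
variable {d : ℕ}

def kvec (d : ℕ) (k : Fin d → ℤ) : Euc d := (show Euc d from WithLp.toLp 2 (fun i => (k i : ℝ)))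

lemma perHole_eq (Oper : Set (Euc d)) (k : Fin d → ℤ) :
    perHole Oper k = (fun x => x - kvec d k) ⁻¹' Oper := rfl

lemma cell_eq (k : Fin d → ℤ) : cell d k = (fun x => x - kvec d k) ⁻¹' unitCube d := rfl

lemma cell_isOpen (k : Fin d → ℤ) : IsOpen (cell d k) := by
  have h : cell d k = ⋂ i, (fun x : Euc d => x i) ⁻¹' Ioo ((k i : ℝ)) ((k i : ℝ) + 1) := by
    ext x
    simp only [cell, Set.mem_setOf_eq, Set.mem_iInter, Set.mem_preimage, Set.mem_Ioo]
    constructor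
    · intro hx i; have := hx i; exact ⟨by linarith [this.1], by linarith [this.2]⟩
    · intro hx i; have := hx i; exact ⟨by linarith [this.1], by linarith [this.2]⟩
  rw [h]
  exact isOpen_iInter_of_finite fun i =>
    ((EuclideanSpace.proj (𝕜 := ℝ) i).continuous).isOpen_preimage _ isOpen_Ioo

lemma cell_convex (k : Fin d → ℤ) : Convex ℝ (cell d k) := by
  have h : cell d k = ⋂ i, (fun x : Euc d => x i) ⁻¹' Ioo ((k i : ℝ)) ((k i : ℝ) + 1) := by
    ext x
    simp only [cell, Set.mem_setOf_eq, Set.mem_iInter, Set.mem_preimage, Set.mem_Ioo]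
    constructor
    · intro hx i; have := hx i; exact ⟨by linarith [this.1], by linarith [this.2]⟩
    · intro hx i; have := hx i; exact ⟨by linarith [this.1], by linarith [this.2]⟩
  rw [h]
  exact convex_iInter fun i =>
    (convex_Ioo _ _).linear_preimage ((EuclideanSpace.proj (𝕜 := ℝ) i) : Euc d →ₗ[ℝ] ℝ)

lemma cell_eq_of_mem {k k' : Fin d → ℤ} {x : Euc d} (h : x ∈ cell d k) (h' : x ∈ cell d k') :
    k = k' := by
  funext i
  have h1 := h i
  have h2 := h' i
  have habs : |((k i - k' i : ℤ) : ℝ)| < 1 := by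
    push_cast
    rw [abs_lt]
    constructor <;> [linarith [h1.1, h1.2, h2.1, h2.2]; linarith [h1.1, h1.2, h2.1, h2.2]]
  have h3 : ((|k i - k' i| : ℤ) : ℝ) < 1 := by rw [Int.cast_abs]; exact habs
  have h4 : |k i - k' i| < 1 := by exact_mod_cast h3
  have := Int.abs_lt_one_iff.mp h4
  omega

lemma hyperplane_null (i : Fin d) (a : ℝ) : volume {x : Euc d | x i = a} = 0 := by
  have hmp := EuclideanSpace.volume_preserving_symm_measurableEquiv_toLp (Fin d)
  have h2 : {x : Euc d | x i = a}
      = (MeasurableEquiv.toLp 2 (Fin d → ℝ)).symm ⁻¹' {f : Fin d → ℝ | f i = a} := rfl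
  have hmeas : MeasurableSet {f : Fin d → ℝ | f i = a} := by
    have : {f : Fin d → ℝ | f i = a} = (fun f : Fin d → ℝ => f i) ⁻¹' {a} := rfl
    rw [this]
    exact (measurable_pi_apply i) (measurableSet_singleton a)
  rw [h2, hmp.measure_preimage hmeas.nullMeasurableSet]
  have := MeasureTheory.Measure.pi_hyperplane (fun _ : Fin d => (volume : Measure ℝ)) i a
  rw [volume_pi]
  exact this

end Geo

section Balls
variable {d : ℕ}

lemma ball_subset_perMinus (hd : 2 ≤ d) {Oper : Set (Euc d)} (hOperOpen : IsOpen Oper)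
    (hOperQ : closure Oper ⊆ unitCube d) {x0 : Euc d} {r : ℝ} (hr : 0 < r)
    (hball : ball x0 r ⊆ Oper) (k : Fin d → ℤ) {β : ℝ} (hβ : β < r / 2) :
    ball (x0 + kvec d k) (r / 2) ⊆ perMinus Oper k β := by
  have hopen : IsOpen (perHole Oper k) := by
    rw [perHole_eq]
    exact hOperOpen.preimage (continuous_id.sub continuous_const)
  have hdist : ∀ z : Euc d, dist (z - kvec d k) x0 = dist z (x0 + kvec d k) := by
    intro z
    have : x0 = x0 + kvec d k - kvec d k := by abel
    rw [this, dist_sub_right]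
    congr 1
    abel
  have hball2 : ∀ s : ℝ, ball (x0 + kvec d k) s ⊆ (fun x => x - kvec d k) ⁻¹' ball x0 s := by
    intro s z hz
    simp only [Set.mem_preimage, mem_ball]
    rw [hdist z]
    exact hz
  have hballk : ball (x0 + kvec d k) r ⊆ perHole Oper k := by
    rw [perHole_eq]
    exact (hball2 r).trans (Set.preimage_mono hball)
  -- frontier is nonempty
  have hne : (frontier (perHole Oper k)).Nonempty := by
    by_contra hfe
    rw [Set.not_nonempty_iff_eq_empty] at hfe
    have hclopen : IsClopen (perHole Oper k) := isClopen_iff_frontier_eq_empty.mpr hfe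
    rcases isClopen_iff.mp hclopen with h | h
    · have : x0 + kvec d k ∈ perHole Oper k := hballk (mem_ball_self hr)
      rw [h] at this
      exact this
    · have hk : kvec d k ∈ perHole Oper k := by rw [h]; trivial
      have : (show Euc d from WithLp.toLp 2 (fun i => (kvec d k) i - (k i : ℝ))) ∈ Oper := hk
      have h0 : (show Euc d from WithLp.toLp 2 (fun i => (kvec d k) i - (k i : ℝ))) ∈ unitCube d :=
        hOperQ (subset_closure this)
      have := h0 ⟨0, by omega⟩
      simp only [kvec, PiLp.toLp_apply, sub_self] at this
      exact lt_irrefl 0 this.1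
  intro y hy
  have hymem : y ∈ perHole Oper k := hballk (ball_subset_ball (by linarith) hy)
  refine ⟨hymem, ?_⟩
  have hfar : ∀ z ∈ frontier (perHole Oper k), r / 2 ≤ dist y z := by
    intro z hz
    have hznm : z ∉ perHole Oper k := by
      rw [hopen.frontier_eq] at hz
      exact hz.2
    have hznb : z ∉ ball (x0 + kvec d k) r := fun hzb => hznm (hballk hzb)
    have h1 : r ≤ dist z (x0 + kvec d k) := by
      by_contra h
      exact hznb (by rw [mem_ball]; linarith)
    have h2 : dist y (x0 + kvec d k) < r / 2 := hy
    have h3 := dist_triangle z y (x0 + kvec d k)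
    rw [dist_comm z y] at h3
    linarith
  have : r / 2 ≤ infDist y (frontier (perHole Oper k)) := by
    by_contra h
    push_neg at h
    obtain ⟨z, hz, hzd⟩ := (infDist_lt_iff hne).mp h
    exact absurd hzd (not_lt.mpr (hfar z hz))
  linarith

lemma exists_uniform_balls (hd : 2 ≤ d) {Oper : Set (Euc d)} (hOperOpen : IsOpen Oper)
    (hOperNe : Oper.Nonempty) (hOperQ : closure Oper ⊆ unitCube d)
    {O : (Fin d → ℤ) → Set (Euc d)} (hOopen : ∀ k, IsOpen (O k)) (hONe : ∀ k, (O k).Nonempty)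
    (hOcell : ∀ k, closure (O k) ⊆ cell d k)
    {α : (Fin d → ℤ) → ℝ} (hαsum : Summable α)
    (hA2 : ∀ k, perMinus Oper k (α k) ⊆ O k) :
    ∃ ρ1 : ℝ, 0 < ρ1 ∧ ρ1 ≤ 1 ∧ ∀ k, ∃ cc, ball cc ρ1 ⊆ O k ∧ cc ∈ cell d k := by
  obtain ⟨x0, hx0⟩ := hOperNe
  obtain ⟨r0, hr0, hball0⟩ := Metric.isOpen_iff.mp hOperOpen x0 hx0
  set r : ℝ := min r0 1 with hrdef
  have hr : 0 < r := lt_min hr0 one_pos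
  have hr1 : r ≤ 1 := min_le_right _ _
  have hball : ball x0 r ⊆ Oper := (ball_subset_ball (min_le_left _ _)).trans hball0
  have hfin : {k : Fin d → ℤ | ¬ α k < r / 2}.Finite := by
    have h1 : ∀ᶠ k in Filter.cofinite, α k < r / 2 :=
      hαsum.tendsto_cofinite_zero (Iio_mem_nhds (by positivity))
    exact Filter.eventually_cofinite.mp h1
  have hballs : ∀ k, ∃ p : Euc d × ℝ, 0 < p.2 ∧ ball p.1 p.2 ⊆ O k := by
    intro k
    obtain ⟨c, hc⟩ := hONe k
    obtain ⟨s, hs, hsub⟩ := Metric.isOpen_iff.mp (hOopen k) c hc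
    exact ⟨(c, s), hs, hsub⟩
  choose p hp hpsub using hballs
  set T := hfin.toFinset with hT
  set ρ1 : ℝ := if h : T.Nonempty then min (r / 2) (T.inf' h (fun k => (p k).2)) else r / 2
    with hρ1
  have hρ1pos : 0 < ρ1 := by
    rw [hρ1]
    split_ifs with h
    · apply lt_min (by positivity)
      rw [Finset.lt_inf'_iff]
      exact fun k _ => hp k
    · positivity
  have hρ1r2 : ρ1 ≤ r / 2 := by
    rw [hρ1]; split_ifs with h
    · exact min_le_left _ _
    · exact le_refl _
  refine ⟨ρ1, hρ1pos, by linarith, fun k => ?_⟩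
  by_cases hk : α k < r / 2
  · refine ⟨x0 + kvec d k, ?_, ?_⟩
    · exact (ball_subset_ball hρ1r2).trans
        ((ball_subset_perMinus hd hOperOpen hOperQ hr hball k hk).trans (hA2 k))
    · have : x0 + kvec d k ∈ O k := by
        apply ((ball_subset_ball hρ1r2).trans
          ((ball_subset_perMinus hd hOperOpen hOperQ hr hball k hk).trans (hA2 k)))
        exact mem_ball_self hρ1pos
      exact hOcell k (subset_closure this)
  · have hkT : k ∈ T := by rw [hT, Set.Finite.mem_toFinset]; exact hk
    have hTne : T.Nonempty := ⟨k, hkT⟩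
    have hρ1k : ρ1 ≤ (p k).2 := by
      rw [hρ1, dif_pos hTne]
      exact (min_le_right _ _).trans (Finset.inf'_le _ hkT)
    refine ⟨(p k).1, (ball_subset_ball hρ1k).trans (hpsub k), ?_⟩
    have : (p k).1 ∈ O k := (ball_subset_ball hρ1k).trans (hpsub k) (mem_ball_self hρ1pos)
    exact hOcell k (subset_closure this)

end Balls

set_option maxHeartbeats 1000000 in
lemma core_poincare {d : ℕ} {u : Euc d → ℝ} (hu : ContDiff ℝ 1 u) (hsupp : HasCompactSupport u)
    (c : Euc d) {ρ R : ℝ} (hρ : 0 < ρ) (hρR : ρ ≤ R) {S : Set (Euc d)} (hSm : MeasurableSet S)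
    (hconv : Convex ℝ S) (hcS : c ∈ S) (hSR : S ⊆ closedBall c R)
    (hzero : ∀ y ∈ ball c ρ, u y = 0) :
    ∫ x in S, u x ^ 2 ≤ R ^ 2 * (R / ρ) ^ d * ∫ x in S, ‖gradient u x‖ ^ 2 := by
  have hR : 0 < R := lt_of_lt_of_le hρ hρR
  have hzero' : ∀ y ∈ closedBall c ρ, u y = 0 := by
    intro y hy
    have h1 : Set.EqOn u (fun _ => (0:ℝ)) (closure (ball c ρ)) :=
      Set.EqOn.closure (fun z hz => hzero z hz) hu.continuous continuous_const
    have := h1 (by rwa [closure_ball c hρ.ne'])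
    simpa using this
  set a0 : ℝ := ρ / R with ha0
  have ha0pos : 0 < a0 := div_pos hρ hR
  have ha0le : a0 ≤ 1 := (div_le_one hR).2 hρR
  set F : Euc d → ℝ := fun y => ‖gradient u y‖ ^ 2 with hF
  have Fcont : Continuous F := (grad_cont hu).norm.pow 2
  have Fcs : HasCompactSupport F := by
    apply HasCompactSupport.comp_left (g := fun z : Euc d => ‖z‖ ^ 2) (grad_compact_support hsupp)
    simp
  have Fint : Integrable F := Fcont.integrable_of_hasCompactSupport Fcs
  have Fnonneg : ∀ y, 0 ≤ F y := fun y => sq_nonneg _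
  have hIF_nonneg : 0 ≤ ∫ x in S, F x := integral_nonneg Fnonneg
  have husq_int : Integrable (fun x => u x ^ 2) := by
    apply (hu.continuous.pow 2).integrable_of_hasCompactSupport
    show HasCompactSupport ((fun z : ℝ => z ^ 2) ∘ u)
    apply HasCompactSupport.comp_left (g := fun z : ℝ => z ^ 2) hsupp
    simp
  -- pointwise estimate
  have point : ∀ x ∈ S, u x ^ 2 ≤ R ^ 2 * ∫ t in a0..1, F (c + t • (x - c)) := by
    intro x hxS
    have hxR : ‖x - c‖ ≤ R := by
      have := hSR hxS; rwa [mem_closedBall, dist_eq_norm] at this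
    set v := x - c with hv
    have hγcont : Continuous fun t : ℝ => c + t • v := by continuity
    have hFt : Continuous fun t : ℝ => F (c + t • v) := Fcont.comp hγcont
    have hRHS0 : 0 ≤ ∫ t in a0..1, F (c + t • v) :=
      intervalIntegral.integral_nonneg ha0le (fun t _ => Fnonneg _)
    rcases le_or_gt ‖v‖ ρ with hcase | hcase
    · have hx0 : u x = 0 := by
        apply hzero'
        rwa [mem_closedBall, dist_eq_norm]
      rw [hx0]
      have : (0:ℝ) ^ 2 = 0 := by norm_num
      rw [this]
      exact mul_nonneg (sq_nonneg R) hRHS0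
    · set a : ℝ := ρ / ‖v‖ with ha
      have hv0 : 0 < ‖v‖ := lt_trans hρ hcase
      have ha1 : a < 1 := (div_lt_one hv0).2 hcase
      have hapos : 0 < a := div_pos hρ hv0
      have ha0a : a0 ≤ a := by
        apply div_le_div_of_nonneg_left hρ.le hv0 hxR
      have hudiff : Differentiable ℝ u := hu.differentiable one_ne_zero
      have hders : ∀ t ∈ uIcc a 1, HasDerivAt (fun s : ℝ => u (c + s • v))
          (fderiv ℝ u (c + t • v) v) t := by
        intro t _
        have h1 : HasDerivAt (fun s : ℝ => c + s • v) v t := by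
          simpa using ((hasDerivAt_id t).smul_const v).const_add c
        exact (hudiff (c + t • v)).hasFDerivAt.comp_hasDerivAt t h1
      have hgc : Continuous fun t : ℝ => fderiv ℝ u (c + t • v) v :=
        Continuous.clm_apply ((hu.continuous_fderiv one_ne_zero).comp hγcont) continuous_const
      have hFTC : ∫ t in a..1, fderiv ℝ u (c + t • v) v = u x - u (c + a • v) := by
        have h := intervalIntegral.integral_eq_sub_of_hasDerivAt hders
          (hgc.intervalIntegrable a 1)
        have e1 : c + (1:ℝ) • v = x := by simp [hv]
        rw [h, e1]
      have hua : u (c + a • v) = 0 := by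
        apply hzero'
        rw [mem_closedBall, dist_eq_norm]
        have e : c + a • v - c = a • v := by abel
        rw [e, norm_smul, Real.norm_eq_abs, abs_of_pos hapos, ha,
          div_mul_cancel₀ _ hv0.ne']
      have hux : u x = ∫ t in a..1, fderiv ℝ u (c + t • v) v := by
        rw [hFTC, hua, sub_zero]
      have hCS := sq_intervalIntegral_le ha1.le hgc
      have hbd : ∀ t : ℝ, (fderiv ℝ u (c + t • v) v) ^ 2 ≤ R ^ 2 * F (c + t • v) := by
        intro t
        have h1 : |fderiv ℝ u (c + t • v) v| ≤ ‖gradient u (c + t • v)‖ * ‖v‖ := by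
          rw [grad_inner]; exact abs_real_inner_le_norm _ _
        have h2 : (fderiv ℝ u (c + t • v) v) ^ 2 ≤ (‖gradient u (c + t • v)‖ * ‖v‖) ^ 2 := by
          rw [← sq_abs]
          exact pow_le_pow_left₀ (abs_nonneg _) h1 2
        refine h2.trans ?_
        have h3 : ‖v‖ ^ 2 ≤ R ^ 2 := pow_le_pow_left₀ (norm_nonneg v) hxR 2
        show _ ≤ R ^ 2 * ‖gradient u (c + t • v)‖ ^ 2
        rw [mul_pow, mul_comm (R ^ 2)]
        exact mul_le_mul_of_nonneg_left h3 (sq_nonneg _)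
      have hint1 : ∫ t in a..1, (fderiv ℝ u (c + t • v) v) ^ 2
          ≤ ∫ t in a..1, R ^ 2 * F (c + t • v) :=
        intervalIntegral.integral_mono_on ha1.le ((hgc.pow 2).intervalIntegrable _ _)
          ((continuous_const.mul hFt).intervalIntegrable _ _) (fun t _ => hbd t)
      have hint2 : ∫ t in a..1, R ^ 2 * F (c + t • v)
          = R ^ 2 * ∫ t in a..1, F (c + t • v) := intervalIntegral.integral_const_mul _ _
      have hint3 : ∫ t in a..1, F (c + t • v) ≤ ∫ t in a0..1, F (c + t • v) :=
        intervalIntegral.integral_mono_interval ha0a ha1.le le_rfl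
          (Filter.Eventually.of_forall fun t => Fnonneg _)
          (hFt.intervalIntegrable _ _)
      have hsq0 : 0 ≤ ∫ t in a..1, (fderiv ℝ u (c + t • v) v) ^ 2 :=
        intervalIntegral.integral_nonneg ha1.le (fun t _ => sq_nonneg _)
      calc u x ^ 2 = (∫ t in a..1, fderiv ℝ u (c + t • v) v) ^ 2 := by rw [hux]
      _ ≤ (1 - a) * ∫ t in a..1, (fderiv ℝ u (c + t • v) v) ^ 2 := hCS
      _ ≤ 1 * ∫ t in a..1, (fderiv ℝ u (c + t • v) v) ^ 2 :=
          mul_le_mul_of_nonneg_right (by linarith) hsq0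
      _ = ∫ t in a..1, (fderiv ℝ u (c + t • v) v) ^ 2 := one_mul _
      _ ≤ R ^ 2 * ∫ t in a..1, F (c + t • v) := by rw [← hint2]; exact hint1
      _ ≤ R ^ 2 * ∫ t in a0..1, F (c + t • v) :=
          mul_le_mul_of_nonneg_left hint3 (sq_nonneg R)
  -- change of variables for fixed t
  have cov : ∀ t : ℝ, t ∈ Ioc a0 (1:ℝ) →
      (∫ x in S, F (c + t • (x - c))) ≤ (R / ρ) ^ d * ∫ x in S, F x := by
    intro t ht
    have htpos : 0 < t := lt_trans ha0pos ht.1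
    set b : Euc d := c - t • c with hb
    have key : ∀ x : Euc d, c + t • (x - c) = t • x + b := by
      intro x; rw [hb, smul_sub]; abel
    have e1 : (∫ x in S, F (c + t • (x - c))) = ∫ x in S, F (t • x + b) := by
      apply integral_congr_ae
      refine Filter.Eventually.of_forall fun x => ?_
      show F (c + t • (x - c)) = F (t • x + b)
      rw [key x]
    have e2 : (∫ x in S, F (t • x + b)) = (t ^ d)⁻¹ • ∫ y in t • S, F (y + b) := by
      have h := MeasureTheory.Measure.setIntegral_comp_smul_of_pos (volume : Measure (Euc d))
        (fun y => F (y + b)) S htpos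
      rw [h, finrank_euclideanSpace_fin]
    have hinj : Function.Injective fun y : Euc d => y + b := fun y z h => by
      simpa using h
    have e3 : (∫ y in t • S, F (y + b)) = ∫ z in (fun y => y + b) '' (t • S), F z := by
      have h1 := (measurePreserving_add_right (volume : Measure (Euc d)) b).setIntegral_preimage_emb
        (MeasurableEquiv.addRight b).measurableEmbedding F ((fun y => y + b) '' (t • S))
      rw [Set.preimage_image_eq _ hinj] at h1
      exact h1
    have hsub : (fun y => y + b) '' (t • S) ⊆ S := by
      rintro _ ⟨_, ⟨s, hs, rfl⟩, rfl⟩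
      have hmem := hconv hcS hs (by linarith [ht.2] : (0:ℝ) ≤ 1 - t) htpos.le (by ring)
      have : (1 - t) • c + t • s = t • s + b := by
        rw [hb, sub_smul, one_smul]; abel
      rwa [this] at hmem
    have e4 : (∫ z in (fun y => y + b) '' (t • S), F z) ≤ ∫ x in S, F x := by
      apply setIntegral_mono_set Fint.integrableOn
        (Filter.Eventually.of_forall fun y => Fnonneg y)
      exact HasSubset.Subset.eventuallyLE hsub
    have h5 : (0:ℝ) ≤ ∫ y in t • S, F (y + b) := integral_nonneg fun y => Fnonneg _
    have hts : (t ^ d)⁻¹ ≤ (R / ρ) ^ d := by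
      calc (t ^ d)⁻¹ = (t⁻¹) ^ d := by rw [inv_pow]
      _ ≤ ((ρ/R)⁻¹) ^ d := by
          apply pow_le_pow_left₀ (inv_nonneg.2 htpos.le)
          exact inv_anti₀ ha0pos ht.1.le
      _ = (R/ρ) ^ d := by rw [inv_div]
    calc (∫ x in S, F (c + t • (x - c))) = (t ^ d)⁻¹ * ∫ y in t • S, F (y + b) := by
          rw [e1, e2, smul_eq_mul]
    _ ≤ (R / ρ) ^ d * ∫ x in S, F x := by
          apply mul_le_mul hts _ h5 (by positivity)
          rw [e3]; exact e4
  -- product integrability and Fubini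
  haveI hfm1 : IsFiniteMeasure (volume.restrict S) :=
    ⟨by rw [Measure.restrict_apply_univ]
        exact lt_of_le_of_lt (measure_mono hSR) measure_closedBall_lt_top⟩
  haveI hfm2 : IsFiniteMeasure (volume.restrict (Ioc a0 (1:ℝ))) :=
    ⟨by rw [Measure.restrict_apply_univ]; exact measure_Ioc_lt_top⟩
  set G : Euc d → ℝ → ℝ := fun x t => F (c + t • (x - c)) with hG
  have hGcont : Continuous (Function.uncurry G) := by
    have h1 : Continuous fun p : Euc d × ℝ => c + p.2 • (p.1 - c) := by fun_prop
    exact Fcont.comp h1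
  obtain ⟨M, hM⟩ := Fcs.exists_bound_of_continuous Fcont
  have hGint : Integrable (Function.uncurry G)
      ((volume.restrict S).prod (volume.restrict (Ioc a0 (1:ℝ)))) := by
    refine (integrable_const M).mono' hGcont.aestronglyMeasurable ?_
    exact Filter.Eventually.of_forall fun p => hM (c + p.2 • (p.1 - c))
  have swap : (∫ x in S, ∫ t in Ioc a0 (1:ℝ), G x t) = ∫ t in Ioc a0 (1:ℝ), ∫ x in S, G x t :=
    integral_integral_swap hGint
  have hmarg1 : Integrable (fun x => ∫ t in Ioc a0 (1:ℝ), G x t) (volume.restrict S) :=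
    hGint.integral_prod_left
  have hmarg2 : Integrable (fun t => ∫ x in S, G x t) (volume.restrict (Ioc a0 (1:ℝ))) :=
    hGint.integral_prod_right
  have step1 : (∫ x in S, u x ^ 2) ≤ ∫ x in S, R ^ 2 * ∫ t in Ioc a0 (1:ℝ), G x t := by
    apply setIntegral_mono_on husq_int.integrableOn (hmarg1.const_mul _) hSm
    intro x hx
    have h := point x hx
    rwa [intervalIntegral.integral_of_le ha0le] at h
  have step2 : (∫ x in S, R ^ 2 * ∫ t in Ioc a0 (1:ℝ), G x t)
      = R ^ 2 * ∫ x in S, ∫ t in Ioc a0 (1:ℝ), G x t := MeasureTheory.integral_const_mul _ _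
  have step3 : (∫ t in Ioc a0 (1:ℝ), ∫ x in S, G x t)
      ≤ ∫ t in Ioc a0 (1:ℝ), (fun _ : ℝ => (R / ρ) ^ d * ∫ x in S, F x) t := by
    apply setIntegral_mono_on hmarg2 (integrable_const _) measurableSet_Ioc
    intro t ht
    exact cov t ht
  have step4 : (∫ t in Ioc a0 (1:ℝ), (fun _ : ℝ => (R / ρ) ^ d * ∫ x in S, F x) t)
      ≤ (R / ρ) ^ d * ∫ x in S, F x := by
    rw [setIntegral_const]
    have hv : volume.real (Ioc a0 (1:ℝ)) = 1 - a0 := by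
      rw [measureReal_def, Real.volume_Ioc, ENNReal.toReal_ofReal (by linarith)]
    rw [smul_eq_mul, hv]
    have hK : 0 ≤ (R / ρ) ^ d * ∫ x in S, F x :=
      mul_nonneg (pow_nonneg (div_pos hR hρ).le d) hIF_nonneg
    nlinarith [hK, ha0pos, ha0le]
  calc ∫ x in S, u x ^ 2 ≤ ∫ x in S, R ^ 2 * ∫ t in Ioc a0 (1:ℝ), G x t := step1
  _ = R ^ 2 * ∫ x in S, ∫ t in Ioc a0 (1:ℝ), G x t := step2
  _ = R ^ 2 * ∫ t in Ioc a0 (1:ℝ), ∫ x in S, G x t := by rw [swap]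
  _ ≤ R ^ 2 * ((R / ρ) ^ d * ∫ x in S, F x) :=
      mul_le_mul_of_nonneg_left (step3.trans step4) (sq_nonneg R)
  _ = R ^ 2 * (R / ρ) ^ d * ∫ x in S, F x := by ring

set_option maxHeartbeats 1000000 in
/-- scaled Poincaré–Friedrichs inequality in the non-periodically perforated
domain `Ω_ε = Ω \ ε·closure(𝒪)` (Lemma 3.2 of the paper). -/
theorem poincare_perforated_nonperiodic (d : ℕ) (hd : 2 ≤ d)
    (Oper : Set (Euc d)) (hOperOpen : IsOpen Oper) (hOperNe : Oper.Nonempty)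
    (hOperQ : closure Oper ⊆ unitCube d)
    (O : (Fin d → ℤ) → Set (Euc d)) (hOopen : ∀ k, IsOpen (O k))
    (hONe : ∀ k, (O k).Nonempty) (hOcell : ∀ k, closure (O k) ⊆ cell d k)
    (α : (Fin d → ℤ) → ℝ) (hαpos : ∀ k, 0 ≤ α k) (hαsum : Summable α)
    (hA2 : ∀ k, perMinus Oper k (α k) ⊆ O k ∧ O k ⊆ perPlus Oper k (α k))
    (Ω : Set (Euc d)) (hΩ : IsOpen Ω) :
    ∃ C > (0 : ℝ), ∀ ε > (0 : ℝ), ∀ u : Euc d → ℝ,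
      ContDiff ℝ 1 u → HasCompactSupport u →
      tsupport u ⊆ Ω \ ε • closure (holes O) →
      ∫ x in Ω \ ε • closure (holes O), (u x) ^ 2 ≤
        C * ε ^ 2 * ∫ x in Ω \ ε • closure (holes O), ‖gradient u x‖ ^ 2 := by
  obtain ⟨ρ1, hρ1pos, hρ1le1, hcc⟩ := exists_uniform_balls hd hOperOpen hOperNe hOperQ
    hOopen hONe hOcell hαsum (fun k => (hA2 k).1)
  choose cc hccsub hcccell using hcc
  have hd0 : (0:ℝ) < (d:ℝ) := by exact_mod_cast (by omega : 0 < d)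
  have hsqd : 1 ≤ Real.sqrt d := by
    rw [show (1:ℝ) = Real.sqrt 1 by simp]
    exact Real.sqrt_le_sqrt (by exact_mod_cast (by omega : 1 ≤ d))
  set C : ℝ := (d : ℝ) * (Real.sqrt d / ρ1) ^ d with hC
  have hCpos : 0 < C := mul_pos hd0 (pow_pos (div_pos (by linarith) hρ1pos) d)
  refine ⟨C, hCpos, ?_⟩
  intro ε hε u hu hsupp hsub
  set A := Ω \ ε • closure (holes O) with hA
  have huz : ∀ x, x ∉ A → u x = 0 := fun x hx =>
    image_eq_zero_of_notMem_tsupport (fun h => hx (hsub h))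
  have hgz : ∀ x, x ∉ A → gradient u x = 0 := fun x hx =>
    grad_zero_of_nmem_tsupport (fun h => hx (hsub h))
  have hL : ∫ x in A, u x ^ 2 = ∫ x, u x ^ 2 :=
    setIntegral_eq_integral_of_forall_compl_eq_zero (fun x hx => by rw [huz x hx]; norm_num)
  have hRq : ∫ x in A, ‖gradient u x‖ ^ 2 = ∫ x, ‖gradient u x‖ ^ 2 :=
    setIntegral_eq_integral_of_forall_compl_eq_zero (fun x hx => by rw [hgz x hx]; simp)
  rw [hL, hRq]
  have husq_int : Integrable (fun x => u x ^ 2) := by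
    apply (hu.continuous.pow 2).integrable_of_hasCompactSupport
    show HasCompactSupport ((fun z : ℝ => z ^ 2) ∘ u)
    apply HasCompactSupport.comp_left (g := fun z : ℝ => z ^ 2) hsupp
    simp
  have hFint : Integrable (fun x => ‖gradient u x‖ ^ 2) := by
    apply ((grad_cont hu).norm.pow 2).integrable_of_hasCompactSupport
    exact (HasCompactSupport.comp_left (g := fun z : Euc d => ‖z‖ ^ 2) (grad_compact_support hsupp) (by simp) :)
  set s : (Fin d → ℤ) → Set (Euc d) := fun k => ε • cell d k with hs
  have hsm : ∀ k, MeasurableSet (s k) :=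
    fun k => ((cell_isOpen k).smul₀ (ne_of_gt hε)).measurableSet
  have hdisj : Pairwise (Function.onFun Disjoint s) := by
    intro k k' hkk
    rw [Function.onFun, Set.disjoint_left]
    rintro x ⟨z, hz, rfl⟩ ⟨z', hz', hzz⟩
    have hzz' : z' = z := smul_right_injective (Euc d) (ne_of_gt hε) hzz
    exact hkk (cell_eq_of_mem hz (hzz' ▸ hz'))
  have hcompl : volume ((⋃ k, s k)ᶜ) = 0 := by
    apply measure_mono_null
      (?_ : (⋃ k, s k)ᶜ ⊆ ⋃ i : Fin d, ⋃ n : ℤ, {x : Euc d | x i = ε * n})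
    · exact measure_iUnion_null fun i => measure_iUnion_null fun n => hyperplane_null i (ε * n)
    · intro x hx
      simp only [Set.mem_compl_iff, Set.mem_iUnion] at hx ⊢
      by_contra hx2
      push_neg at hx2
      apply hx
      set z : Euc d := ε⁻¹ • x with hz
      have hzi : ∀ i, z i = ε⁻¹ * x i := fun i => rfl
      have hxz : ε • z = x := smul_inv_smul₀ (ne_of_gt hε) x
      refine ⟨fun i => ⌊z i⌋, z, ?_, hxz⟩
      intro i
      have hfl : (⌊z i⌋ : ℝ) ≤ z i := Int.floor_le _
      have hfl2 : z i < (⌊z i⌋ : ℝ) + 1 := Int.lt_floor_add_one _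
      have hne : z i ≠ (⌊z i⌋ : ℝ) := by
        intro h0
        apply hx2 i ⌊z i⌋
        have hxi : x i = ε * z i := by
          rw [hzi i]
          field_simp
        show x i = ε * (⌊z i⌋ : ℝ)
        rw [hxi]
        congr 1
      constructor
      · have := lt_of_le_of_ne hfl (Ne.symm hne)
        linarith
      · linarith
  have hrestrict : volume.restrict (⋃ k, s k) = volume :=
    Measure.restrict_eq_self_of_ae_mem (mem_ae_iff.mpr hcompl)
  have hsum1 : HasSum (fun k => ∫ x in s k, u x ^ 2) (∫ x, u x ^ 2) := by
    have h := hasSum_integral_iUnion hsm hdisj husq_int.integrableOn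
    have e : (∫ x in ⋃ k, s k, u x ^ 2) = ∫ x, u x ^ 2 := by rw [hrestrict]
    rwa [e] at h
  have hsum2 : HasSum (fun k => ∫ x in s k, ‖gradient u x‖ ^ 2)
      (∫ x, ‖gradient u x‖ ^ 2) := by
    have h := hasSum_integral_iUnion hsm hdisj hFint.integrableOn
    have e : (∫ x in ⋃ k, s k, ‖gradient u x‖ ^ 2) = ∫ x, ‖gradient u x‖ ^ 2 := by
      rw [hrestrict]
    rwa [e] at h
  have percell : ∀ k, ∫ x in s k, u x ^ 2
      ≤ C * ε ^ 2 * ∫ x in s k, ‖gradient u x‖ ^ 2 := by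
    intro k
    have hzero : ∀ y ∈ ball (ε • cc k) (ε * ρ1), u y = 0 := by
      intro y hy
      apply huz
      have h1 : ball (ε • cc k) (ε * ρ1) = ε • ball (cc k) ρ1 := by
        rw [_root_.smul_ball (ne_of_gt hε), Real.norm_eq_abs, abs_of_pos hε]
      have h2 : y ∈ ε • closure (holes O) := by
        rw [h1] at hy
        have hsubc : ball (cc k) ρ1 ⊆ closure (holes O) :=
          (hccsub k).trans ((Set.subset_iUnion O k).trans subset_closure)
        exact Set.smul_set_mono hsubc hy
      intro hyA
      exact hyA.2 h2
    have hSR : s k ⊆ closedBall (ε • cc k) (ε * Real.sqrt d) := by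
      rintro _ ⟨z, hz, rfl⟩
      rw [mem_closedBall, dist_smul₀, Real.norm_eq_abs, abs_of_pos hε]
      apply mul_le_mul_of_nonneg_left _ hε.le
      rw [EuclideanSpace.dist_eq]
      have hb : ∀ i, dist (z i) (cc k i) ^ 2 ≤ 1 := by
        intro i
        have h1 := hz i
        have h2 := hcccell k i
        rw [Real.dist_eq, sq_abs]
        nlinarith [h1.1, h1.2, h2.1, h2.2]
      calc Real.sqrt (∑ i, dist (z i) (cc k i) ^ 2)
          ≤ Real.sqrt (∑ _i : Fin d, (1:ℝ)) :=
            Real.sqrt_le_sqrt (Finset.sum_le_sum (fun i _ => hb i))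
      _ = Real.sqrt d := by simp
    have hcore := core_poincare hu hsupp (ε • cc k) (mul_pos hε hρ1pos)
      (mul_le_mul_of_nonneg_left (hρ1le1.trans hsqd) hε.le) (hsm k)
      ((cell_convex k).smul ε) (Set.smul_mem_smul_set (hcccell k)) hSR hzero
    refine hcore.trans (le_of_eq ?_)
    have he : (ε * Real.sqrt d) ^ 2 * ((ε * Real.sqrt d) / (ε * ρ1)) ^ d = C * ε ^ 2 := by
      rw [mul_div_mul_left _ _ (ne_of_gt hε), mul_pow,
        Real.sq_sqrt (le_of_lt hd0), hC]
      ring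
    rw [he]
  have hsum2' : HasSum (fun k => C * ε ^ 2 * ∫ x in s k, ‖gradient u x‖ ^ 2)
      (C * ε ^ 2 * ∫ x, ‖gradient u x‖ ^ 2) := hsum2.mul_left _
  exact hasSum_le percell hsum1 hsum2'
end
end

section
/- Assume the periodic perforations and Assumption (A2) as described in the context, where each 𝒪_k is an open subset of ℝ^d. Then there exists ρ > 0 such that for every k ∈ ℤ^d with 𝒪_k ∩ 𝒪_k^per ≠ ∅, there exist a point x ∈ ℝ^d and a radius r > 0 such that the closed ball of center x and radius r is contained in 𝒪_k ∩ 𝒪_k^per and has Lebesgue measure at least ρ. -/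
open MeasureTheory Metric Set Filter Topology Asymptotics RealInnerProductSpace Pointwise

noncomputable section

/-- perturbed perforations meeting their periodic counterparts contain closed
balls of uniformly positive volume inside the intersection (Lemma A.2 of the paper). -/
theorem uniform_ball_in_intersection (d : ℕ) (hd : 2 ≤ d)
    (Oper : Set (Euc d)) (hOperOpen : IsOpen Oper) (hOperNe : Oper.Nonempty)
    (hOperQ : closure Oper ⊆ unitCube d)
    (O : (Fin d → ℤ) → Set (Euc d)) (hOopen : ∀ k, IsOpen (O k))
    (α : (Fin d → ℤ) → ℝ) (hαpos : ∀ k, 0 ≤ α k) (hαsum : Summable α)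
    (hA2 : ∀ k, perMinus Oper k (α k) ⊆ O k ∧ O k ⊆ perPlus Oper k (α k)) :
    ∃ ρ > (0 : ℝ), ∀ k : Fin d → ℤ, (O k ∩ perHole Oper k).Nonempty →
      ∃ (x : Euc d) (r : ℝ), 0 < r ∧
        Metric.closedBall x r ⊆ O k ∩ perHole Oper k ∧
        ENNReal.ofReal ρ ≤ volume (Metric.closedBall x r) := by
  classical
  -- choose a ball inside Oper
  obtain ⟨x0, hx0⟩ := hOperNe
  obtain ⟨r0, hr0pos, hr0⟩ := Metric.isOpen_iff.mp hOperOpen x0 hx0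
  -- choose balls in each nonempty intersection
  have hPHopen : ∀ k : Fin d → ℤ, IsOpen (perHole Oper k) := by
    intro k
    have : perHole Oper k = (fun x : Euc d => x - (show Euc d from WithLp.toLp 2 (fun i => (k i : ℝ)))) ⁻¹' Oper := by
      ext y
      show ((show Euc d from WithLp.toLp 2 (fun i => y i - (k i : ℝ))) ∈ Oper) ↔ _
      rfl
    rw [this]
    exact hOperOpen.preimage (continuous_id.sub continuous_const)
  have hchoice : ∀ k : Fin d → ℤ, (O k ∩ perHole Oper k).Nonempty →
      ∃ (x : Euc d) (r : ℝ), 0 < r ∧ Metric.closedBall x r ⊆ O k ∩ perHole Oper k := by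
    intro k ⟨y, hy⟩
    obtain ⟨ε, hεpos, hε⟩ := Metric.isOpen_iff.mp ((hOopen k).inter (hPHopen k)) y hy
    exact ⟨y, ε / 2, by positivity,
      (Metric.closedBall_subset_ball (by linarith)).trans hε⟩
  choose! xc rc hrcpos hrcsub using hchoice
  -- the set of bad indices is finite
  have hfin : {k : Fin d → ℤ | r0 / 4 ≤ α k}.Finite := by
    have := hαsum.tendsto_cofinite_zero
    have h := this (Metric.ball_mem_nhds 0 (show (0:ℝ) < r0 / 4 by positivity))
    rw [Filter.mem_map, Filter.mem_cofinite] at h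
    refine h.subset fun k hk => ?_
    simp only [Set.mem_compl_iff, Set.mem_preimage, Metric.mem_ball, Real.dist_eq, not_lt,
      sub_zero]
    rw [abs_of_nonneg (hαpos k)]
    exact hk
  set F : Finset (Fin d → ℤ) :=
    hfin.toFinset.filter (fun k => (O k ∩ perHole Oper k).Nonempty) with hF
  set T : Finset ℝ := insert (r0 / 4) (F.image rc) with hT
  have hTne : T.Nonempty := ⟨r0 / 4, Finset.mem_insert_self _ _⟩
  set rmin : ℝ := T.min' hTne with hrmin
  have hrminpos : 0 < rmin := by
    have hmem : rmin ∈ T := T.min'_mem hTne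
    rw [hT, Finset.mem_insert] at hmem
    rcases hmem with h | h
    · rw [h]; positivity
    · obtain ⟨k, hkF, hk⟩ := Finset.mem_image.mp h
      rw [hF, Finset.mem_filter] at hkF
      rw [← hk]
      exact hrcpos k hkF.2
  refine ⟨(volume (Metric.closedBall (0 : Euc d) rmin)).toReal,
    ENNReal.toReal_pos (measure_closedBall_pos _ _ hrminpos).ne' measure_closedBall_lt_top.ne,
    fun k hk => ?_⟩
  have hvol : ∀ (x : Euc d) (r : ℝ), rmin ≤ r →
      ENNReal.ofReal (volume (Metric.closedBall (0 : Euc d) rmin)).toReal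
        ≤ volume (Metric.closedBall x r) := by
    intro x r hr
    calc ENNReal.ofReal (volume (Metric.closedBall (0 : Euc d) rmin)).toReal
        ≤ volume (Metric.closedBall (0 : Euc d) rmin) := ENNReal.ofReal_toReal_le
      _ = volume (Metric.closedBall x rmin) := (Measure.addHaar_closedBall_center _ _ _).symm
      _ ≤ volume (Metric.closedBall x r) :=
          measure_mono (Metric.closedBall_subset_closedBall hr)
  by_cases hkα : r0 / 4 ≤ α k
  · -- bad index: use the chosen ball
    have hkF : k ∈ F := by
      rw [hF, Finset.mem_filter, Set.Finite.mem_toFinset]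
      exact ⟨hkα, hk⟩
    refine ⟨xc k, rc k, hrcpos k hk, hrcsub k hk, hvol _ _ ?_⟩
    exact T.min'_le _ (Finset.mem_insert_of_mem (Finset.mem_image_of_mem rc hkF))
  · -- good index: use the translated ball around x0
    push_neg at hkα
    set kv : Euc d := WithLp.toLp 2 (fun i => (k i : ℝ)) with hkv
    set c : Euc d := x0 + kv with hc
    have hsubeq : ∀ y : Euc d, (show Euc d from WithLp.toLp 2 (fun i => y i - (k i : ℝ))) = y - kv := by
      intro y; ext i; rfl
    have hmemPH : ∀ y : Euc d, dist y c < r0 → y ∈ perHole Oper k := by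
      intro y hy
      show (show Euc d from WithLp.toLp 2 (fun i => y i - (k i : ℝ))) ∈ Oper
      rw [hsubeq]
      apply hr0
      rw [Metric.mem_ball]
      have : dist (y - kv) x0 = dist y c := by
        calc dist (y - kv) x0 = dist (y - kv) ((x0 + kv) - kv) := by
              rw [add_sub_cancel_right]
          _ = dist y (x0 + kv) := dist_sub_right _ _ _
          _ = dist y c := by rw [hc]
      rwa [this]
    have hcmem : c ∈ perHole Oper k := hmemPH c (by simp [hr0pos])
    -- the frontier of perHole is nonempty
    have hfrne : (frontier (perHole Oper k)).Nonempty := by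
      by_contra hfr
      rw [Set.not_nonempty_iff_eq_empty] at hfr
      have hclopen : IsClopen (perHole Oper k) := isClopen_iff_frontier_eq_empty.mpr hfr
      rcases isClopen_iff.mp hclopen with h | h
      · rw [h] at hcmem; exact hcmem
      · -- kv ∉ perHole since 0 ∉ Oper
        have : kv ∈ perHole Oper k := h ▸ Set.mem_univ kv
        have h0 : (show Euc d from WithLp.toLp 2 (fun i => kv i - (k i : ℝ))) ∈ Oper := this
        have h0' : (show Euc d from WithLp.toLp 2 (fun i => kv i - (k i : ℝ))) ∈ unitCube d :=
          hOperQ (subset_closure h0)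
        have := (h0' ⟨0, by omega⟩).1
        simp [hkv] at this
    -- the small ball lies in perMinus
    have hball : Metric.closedBall c (r0 / 4) ⊆ O k ∩ perHole Oper k := by
      intro y hy
      rw [Metric.mem_closedBall] at hy
      have hyPH : y ∈ perHole Oper k := hmemPH y (by linarith)
      have hinf : r0 / 2 ≤ Metric.infDist y (frontier (perHole Oper k)) := by
        by_contra hlt
        push_neg at hlt
        obtain ⟨z, hzfr, hz⟩ := (Metric.infDist_lt_iff hfrne).mp hlt
        have hzPH : z ∈ perHole Oper k := by
          apply hmemPH
          calc dist z c ≤ dist z y + dist y c := dist_triangle _ _ _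
            _ < r0 / 2 + r0 / 4 := by rw [dist_comm z y]; linarith
            _ < r0 := by linarith
        rw [(hPHopen k).frontier_eq] at hzfr
        exact hzfr.2 hzPH
      refine ⟨(hA2 k).1 ⟨hyPH, ?_⟩, hyPH⟩
      calc α k < r0 / 4 := hkα
        _ < r0 / 2 := by linarith
        _ ≤ _ := hinf
    exact ⟨c, r0 / 4, by positivity, hball,
      hvol _ _ (T.min'_le _ (Finset.mem_insert_self _ _))⟩
end
end
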